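/- For the RS-game (N₀, v) corresponding to an RS-situation, a vector x ∈ ℝ^{N₀} belongs to Core(N₀, v) if and only if there exists a price vector w^* ∈ ℝ^N with w_i^* ≥ c for all i ∈ N and ∑_{i∈S} (p_i(q_i^c) − w_i^*)·q_i^c ≥ v(S) for every nonempty coalition S ⊆ N, such that x_0 = ∑_{i∈N} (w_i^* − c)·q_i^c and x_i = (p_i(q_i^c) − w_i^*)·q_i^c for every i ∈ N. -/

import Mathlib

open Finset

/-- An RS-situation with `n` retailers; the supplier is treated separately.
`c` is the unit production cost, `w` the wholesale price function and
`p i` the expected price function of retailer `i`.  All price functions are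
decreasing and continuous on `[0, ∞)`, `w` exceeds `c` everywhere,
`p i 0 > w 0` and `p i` reaches the value `c` at some positive quantity. -/
structure RSSituation (n : ℕ) where
  c : ℝ
  w : ℝ → ℝ
  p : Fin n → ℝ → ℝ
  w_anti : ∀ ⦃q q' : ℝ⦄, 0 ≤ q → q ≤ q' → w q' ≤ w q
  w_cont : ContinuousOn w (Set.Ici 0)
  w_gt_c : ∀ q : ℝ, 0 ≤ q → c < w q
  p_anti : ∀ i : Fin n, ∀ ⦃q q' : ℝ⦄, 0 ≤ q → q ≤ q' → p i q' ≤ p i q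
  p_cont : ∀ i : Fin n, ContinuousOn (p i) (Set.Ici 0)
  p_zero_gt : ∀ i : Fin n, w 0 < p i 0
  exists_eq_c : ∀ i : Fin n, ∃ q : ℝ, 0 < q ∧ p i q = c

namespace RSSituation

variable {n : ℕ}

/-- The feasible set `Q^S ⊆ [0,∞)^S` of order vectors for a coalition `S` of retailers. -/
def QSet (R : RSSituation n) (S : Finset (Fin n)) : Set (S → ℝ) :=
  {q | ∀ i : S, 0 ≤ q i ∧ R.w (∑ j : S, q j) ≤ R.p i.1 (q i)}

/-- The joint profit `∑_{i ∈ S} (p_i(q_i) - w(q_S)) q_i` of a coalition `S` of retailers. -/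
def coalProfit (R : RSSituation n) (S : Finset (Fin n)) (q : S → ℝ) : ℝ :=
  ∑ i : S, (R.p i.1 (q i) - R.w (∑ j : S, q j)) * q i

/-- `q` is an optimal order vector for the coalition `S` of retailers. -/
def IsCoalOpt (R : RSSituation n) (S : Finset (Fin n)) (q : S → ℝ) : Prop :=
  q ∈ R.QSet S ∧ ∀ q' ∈ R.QSet S, R.coalProfit S q' ≤ R.coalProfit S q

/-- The feasible set of order quantities of retailer `i` at unit price `c`. -/
def QcSet (R : RSSituation n) (i : Fin n) : Set ℝ :=
  {q | 0 ≤ q ∧ R.c ≤ R.p i q}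

/-- The profit `(p_i(q) - c) q` of retailer `i` at unit price `c`. -/
def indProfit (R : RSSituation n) (i : Fin n) (q : ℝ) : ℝ :=
  (R.p i q - R.c) * q

/-- `q` is an optimal order quantity for retailer `i` at unit price `c`. -/
def IsIndOpt (R : RSSituation n) (i : Fin n) (q : ℝ) : Prop :=
  q ∈ R.QcSet i ∧ ∀ q' ∈ R.QcSet i, R.indProfit i q' ≤ R.indProfit i q

/-- `v` is the RS-game determined by chosen optimal order vectors `qS S`
(for each retailer coalition `S`) and `qc i` (for each retailer `i`, when
cooperating with the supplier).  Players: `none` is the supplier `0`,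
`some i` is retailer `i`. -/
def IsRSGame (R : RSSituation n) (qS : (S : Finset (Fin n)) → (S → ℝ))
    (qc : Fin n → ℝ) (v : Finset (Option (Fin n)) → ℝ) : Prop :=
  v ∅ = 0 ∧ v {none} = 0 ∧
    (∀ S : Finset (Fin n), S.Nonempty → v (S.image some) = R.coalProfit S (qS S)) ∧
    (∀ S : Finset (Fin n), S.Nonempty →
      v (insert none (S.image some)) = ∑ i ∈ S, R.indProfit i (qc i))

/-- The core of a TU game on the player set `N₀ = Option (Fin n)`. -/
def core (v : Finset (Option (Fin n)) → ℝ) : Set (Option (Fin n) → ℝ) :=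
  {x | ∑ i : Option (Fin n), x i = v Finset.univ ∧
    ∀ T : Finset (Option (Fin n)), v T ≤ ∑ i ∈ T, x i}

end RSSituation

private lemma sum_image_some' {n : ℕ} (S : Finset (Fin n)) (x : Option (Fin n) → ℝ) :
    ∑ k ∈ S.image some, x k = ∑ i ∈ S, x (some i) :=
  Finset.sum_image (by intro a _ b _ h; exact Option.some.inj h)

private lemma sum_insert_none' {n : ℕ} (S : Finset (Fin n)) (x : Option (Fin n) → ℝ) :
    ∑ k ∈ insert none (S.image some), x k = x none + ∑ i ∈ S, x (some i) := by
  rw [Finset.sum_insert (by simp), sum_image_some']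

private lemma univ_option_eq {n : ℕ} :
    (Finset.univ : Finset (Option (Fin n))) =
      insert none ((Finset.univ : Finset (Fin n)).image some) := by
  ext k; cases k <;> simp

/-- Alternative description of the core of an RS-game: `x` is a core
allocation iff it arises from fixed wholesale prices `w^*` as in
Corollary `ws`: each retailer gets `(p_i(q_i^c) - w_i^*) q_i^c` and the
supplier gets `∑_i (w_i^* - c) q_i^c`. -/
theorem rs_game_core_characterization (n : ℕ) (R : RSSituation n)
    (qS : (S : Finset (Fin n)) → (S → ℝ)) (qc : Fin n → ℝ)
    (hqS : ∀ S : Finset (Fin n), S.Nonempty → R.IsCoalOpt S (qS S))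
    (hqc : ∀ i : Fin n, R.IsIndOpt i (qc i))
    (v : Finset (Option (Fin n)) → ℝ) (hv : R.IsRSGame qS qc v)
    (x : Option (Fin n) → ℝ) :
    x ∈ RSSituation.core v ↔
      ∃ wstar : Fin n → ℝ, (∀ i : Fin n, R.c ≤ wstar i) ∧
        (∀ S : Finset (Fin n), S.Nonempty →
          v (S.image some) ≤ ∑ i ∈ S, (R.p i (qc i) - wstar i) * qc i) ∧
        x none = ∑ i : Fin n, (wstar i - R.c) * qc i ∧
        ∀ i : Fin n, x (some i) = (R.p i (qc i) - wstar i) * qc i := by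
  obtain ⟨hv0, hvn, hvS, hvNS⟩ := hv
  have qc_nonneg : ∀ i, 0 ≤ qc i := fun i => (hqc i).1.1
  have vuniv : v Finset.univ = ∑ i : Fin n, R.indProfit i (qc i) := by
    rcases (Finset.univ : Finset (Fin n)).eq_empty_or_nonempty with h | h
    · have h2 : (Finset.univ : Finset (Option (Fin n))) = {none} := by
        rw [univ_option_eq, h]; simp
      rw [h2, hvn, h, Finset.sum_empty]
    · rw [univ_option_eq, hvNS _ h]
  constructor
  · rintro ⟨heff, hcore⟩
    rw [Fintype.sum_option, vuniv] at heff
    -- upper bound on retailer payoffs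
    have hub : ∀ i : Fin n, x (some i) ≤ R.indProfit i (qc i) := by
      intro i
      have hT := hcore (insert none ((Finset.univ.erase i).image some))
      have hvT : v (insert none ((Finset.univ.erase i).image some))
          = ∑ j ∈ Finset.univ.erase i, R.indProfit j (qc j) := by
        rcases (Finset.univ.erase i).eq_empty_or_nonempty with h | h
        · rw [h]; simpa using hvn
        · exact hvNS _ h
      rw [hvT, sum_insert_none'] at hT
      have hsplit : ∑ j : Fin n, R.indProfit j (qc j)
          = R.indProfit i (qc i) + ∑ j ∈ Finset.univ.erase i, R.indProfit j (qc j) :=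
        (Finset.add_sum_erase _ _ (Finset.mem_univ i)).symm
      have hx : ∑ j : Fin n, x (some j)
          = x (some i) + ∑ j ∈ Finset.univ.erase i, x (some j) :=
        (Finset.add_sum_erase _ _ (Finset.mem_univ i)).symm
      linarith
    -- lower bound on retailer payoffs
    have hlb : ∀ i : Fin n, 0 ≤ x (some i) := by
      intro i
      have hT := hcore (({i} : Finset (Fin n)).image some)
      rw [hvS {i} (Finset.singleton_nonempty i), sum_image_some',
        Finset.sum_singleton] at hT
      have hfeas : (fun _ => (0:ℝ)) ∈ R.QSet {i} := by
        intro j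
        refine ⟨le_refl 0, ?_⟩
        have hz : ∑ _j : ({i} : Finset (Fin n)), (0:ℝ) = 0 := by simp
        rw [hz]
        exact le_of_lt (R.p_zero_gt j.1)
      have hopt := (hqS {i} (Finset.singleton_nonempty i)).2 _ hfeas
      have hz : R.coalProfit {i} (fun _ => (0:ℝ)) = 0 := by
        simp [RSSituation.coalProfit]
      linarith
    set W : Fin n → ℝ := fun i =>
      if qc i = 0 then R.c else R.p i (qc i) - x (some i) / qc i with hW
    have key : ∀ i, x (some i) = (R.p i (qc i) - W i) * qc i := by
      intro i
      by_cases h : qc i = 0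
      · have h1 := hub i
        rw [RSSituation.indProfit, h, mul_zero] at h1
        simp only [hW, if_pos h, h, mul_zero]
        linarith [hlb i]
      · have hq : 0 < qc i := lt_of_le_of_ne (qc_nonneg i) (Ne.symm h)
        simp only [hW, if_neg h]
        field_simp
        ring
    have hWc : ∀ i, R.c ≤ W i := by
      intro i
      by_cases h : qc i = 0
      · simp [hW, h]
      · have hq : 0 < qc i := lt_of_le_of_ne (qc_nonneg i) (Ne.symm h)
        simp only [hW, if_neg h]
        have h1 := hub i
        rw [RSSituation.indProfit] at h1
        have h2 : x (some i) / qc i ≤ R.p i (qc i) - R.c := by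
          rw [div_le_iff₀ hq]; linarith
        linarith
    have hcoal : ∀ S : Finset (Fin n), S.Nonempty →
        v (S.image some) ≤ ∑ i ∈ S, (R.p i (qc i) - W i) * qc i := by
      intro S _
      have hT := hcore (S.image some)
      rw [sum_image_some'] at hT
      calc v (S.image some) ≤ ∑ i ∈ S, x (some i) := hT
        _ = _ := Finset.sum_congr rfl (fun i _ => key i)
    have hx0 : x none = ∑ i : Fin n, (W i - R.c) * qc i := by
      have h2 : ∑ i : Fin n, x (some i) = ∑ i : Fin n, (R.p i (qc i) - W i) * qc i :=
        Finset.sum_congr rfl (fun i _ => key i)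
      have h3 : ∑ i : Fin n, R.indProfit i (qc i)
          = ∑ i : Fin n, (R.p i (qc i) - W i) * qc i
            + ∑ i : Fin n, (W i - R.c) * qc i := by
        rw [← Finset.sum_add_distrib]
        refine Finset.sum_congr rfl fun i _ => ?_
        rw [RSSituation.indProfit]; ring
      linarith
    exact ⟨W, hWc, hcoal, hx0, key⟩
  · rintro ⟨W, hWc, hcoal, hx0, hxi⟩
    have term_nonneg : ∀ i : Fin n, 0 ≤ (W i - R.c) * qc i := fun i =>
      mul_nonneg (by linarith [hWc i]) (qc_nonneg i)
    constructor
    · rw [Fintype.sum_option, vuniv, hx0]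
      have h2 : ∑ i : Fin n, x (some i) = ∑ i : Fin n, (R.p i (qc i) - W i) * qc i :=
        Finset.sum_congr rfl fun i _ => hxi i
      rw [h2, ← Finset.sum_add_distrib]
      refine Finset.sum_congr rfl fun i _ => ?_
      rw [RSSituation.indProfit]; ring
    · intro T
      by_cases hn : none ∈ T
      · have hT : T = insert none ((Finset.eraseNone T).image some) := by
          ext k
          cases k with
          | none => simp [hn]
          | some a => simp [Finset.mem_eraseNone]
        rcases (Finset.eraseNone T).eq_empty_or_nonempty with h | h
        · have hTn : T = {none} := by rw [hT, h]; simp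
          rw [hTn, hvn, Finset.sum_singleton, hx0]
          exact Finset.sum_nonneg fun i _ => term_nonneg i
        · rw [hT, hvNS _ h, sum_insert_none']
          have h1 : ∑ i ∈ Finset.eraseNone T, R.indProfit i (qc i)
              = ∑ i ∈ Finset.eraseNone T, (R.p i (qc i) - W i) * qc i
                + ∑ i ∈ Finset.eraseNone T, (W i - R.c) * qc i := by
            rw [← Finset.sum_add_distrib]
            refine Finset.sum_congr rfl fun i _ => ?_
            rw [RSSituation.indProfit]; ring
          have h2 : ∑ i ∈ Finset.eraseNone T, (W i - R.c) * qc i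
              ≤ ∑ i : Fin n, (W i - R.c) * qc i :=
            Finset.sum_le_sum_of_subset_of_nonneg (Finset.subset_univ _)
              (fun i _ _ => term_nonneg i)
          have h3 : ∑ i ∈ Finset.eraseNone T, x (some i)
              = ∑ i ∈ Finset.eraseNone T, (R.p i (qc i) - W i) * qc i :=
            Finset.sum_congr rfl fun i _ => hxi i
          rw [hx0, h3]
          linarith
      · have hT : T = (Finset.eraseNone T).image some := by
          ext k
          cases k with
          | none => simp [hn]
          | some a => simp [Finset.mem_eraseNone]
        rcases (Finset.eraseNone T).eq_empty_or_nonempty with h | h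
        · have hTe : T = ∅ := by rw [hT, h]; simp
          rw [hTe, hv0, Finset.sum_empty]
        · rw [hT, sum_image_some']
          have h3 : ∑ i ∈ Finset.eraseNone T, x (some i)
              = ∑ i ∈ Finset.eraseNone T, (R.p i (qc i) - W i) * qc i :=
            Finset.sum_congr rfl fun i _ => hxi i
          rw [h3]
          exact hcoal _ h
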